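/- Let n ∈ ℕ and let (M_i)_{i=0,…,n} be a martingale with respect to a filtration (F_i)_{i=0,…,n} such that 0 ≤ M_i ≤ 1 a.s. for every i. Then P(M_i > 0 for all i ∈ {0,…,n}) ≥ E[M_0]. -/

import Mathlib

open MeasureTheory

/-- For a `[0,1]`-valued martingale `(M_i)_{i=0,…,n}`,
`P(M_i > 0 for all i) ≥ E[M_0]`. -/
theorem prob_pos_ge_expectation_of_martingale_in_unit_interval
    {Ω : Type*} {m0 : MeasurableSpace Ω} {μ : Measure Ω} [IsProbabilityMeasure μ]
    (n : ℕ) (ℱ : Filtration (Fin (n + 1)) m0) (M : Fin (n + 1) → Ω → ℝ)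
    (hM : Martingale M ℱ μ)
    (h01 : ∀ i, ∀ᵐ ω ∂μ, 0 ≤ M i ω ∧ M i ω ≤ 1) :
    ENNReal.ofReal (∫ ω, M 0 ω ∂μ) ≤ μ {ω | ∀ i, 0 < M i ω} := by
  classical
  set N : Fin (n + 1) := Fin.last n with hN
  set A : Set Ω := {ω | ∀ i, 0 < M i ω} with hAdef
  have hmeasMi : ∀ i, Measurable (M i) :=
    fun i => ((hM.stronglyAdapted i).measurable).mono (ℱ.le i) le_rfl
  have hAmeas : MeasurableSet A := by
    have : A = ⋂ i, {ω | 0 < M i ω} := by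
      ext ω; simp [hAdef, Set.mem_iInter, Set.mem_setOf_eq]
    rw [this]
    exact MeasurableSet.iInter fun i => measurableSet_lt measurable_const (hmeasMi i)
  -- absorption at 0
  have habs : ∀ i : Fin (n + 1), ∀ᵐ ω ∂μ, M i ω = 0 → M N ω = 0 := by
    intro i
    have hSi : MeasurableSet[ℱ i] {ω | M i ω = 0} :=
      (hM.stronglyAdapted i).measurable (measurableSet_singleton 0)
    have hSi0 : MeasurableSet {ω | M i ω = 0} := ℱ.le i _ hSi
    have hzero : ∫ ω in {ω | M i ω = 0}, M N ω ∂μ = 0 := by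
      rw [← hM.setIntegral_eq (le_top.trans_eq hN.symm : i ≤ N) hSi]
      exact setIntegral_eq_zero_of_forall_eq_zero fun x hx => hx
    have hnonneg : 0 ≤ᵐ[μ.restrict {ω | M i ω = 0}] M N :=
      ae_restrict_of_ae ((h01 N).mono fun ω h => h.1)
    have := (setIntegral_eq_zero_iff_of_nonneg_ae hnonneg
      ((hM.integrable N).integrableOn)).mp hzero
    exact (ae_restrict_iff' hSi0).mp this
  have habs' : ∀ᵐ ω ∂μ, ∀ i, M i ω = 0 → M N ω = 0 := ae_all_iff.mpr habs
  have hbound : ∀ᵐ ω ∂μ, M N ω ≤ A.indicator (fun _ => (1 : ℝ)) ω := by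
    filter_upwards [habs', ae_all_iff.mpr h01] with ω h h01ω
    by_cases hω : ω ∈ A
    · simp only [Set.indicator_of_mem hω]
      exact (h01ω N).2
    · simp only [Set.indicator_of_notMem hω]
      simp only [hAdef, Set.mem_setOf_eq, not_forall, not_lt] at hω
      obtain ⟨i, hi⟩ := hω
      exact le_of_eq (h i (le_antisymm hi ((h01ω i).1)))
  have hint : ∫ ω, M N ω ∂μ ≤ (μ A).toReal := by
    have h1 : ∫ ω, A.indicator (fun _ => (1 : ℝ)) ω ∂μ = (μ A).toReal := by
      rw [integral_indicator_const _ hAmeas]; simp; rfl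
    calc ∫ ω, M N ω ∂μ ≤ ∫ ω, A.indicator (fun _ => (1 : ℝ)) ω ∂μ :=
          integral_mono_ae (hM.integrable N)
            ((integrable_const (1 : ℝ)).indicator hAmeas) hbound
      _ = (μ A).toReal := h1
  have heq : ∫ ω, M 0 ω ∂μ = ∫ ω, M N ω ∂μ := by
    have := hM.setIntegral_eq (Fin.zero_le N) (MeasurableSet.univ)
    simpa using this
  calc ENNReal.ofReal (∫ ω, M 0 ω ∂μ) = ENNReal.ofReal (∫ ω, M N ω ∂μ) := by rw [heq]
    _ ≤ ENNReal.ofReal (μ A).toReal := ENNReal.ofReal_le_ofReal hint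
    _ ≤ μ A := ENNReal.ofReal_toReal_le
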